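/- Let C be a compact convex body in ℝ², centrally symmetric with center p, and suppose C is not a Euclidean ball. Then C can be partitioned into two subsets each of diameter strictly less than diam(C). (Equivalently: among centrally symmetric planar convex bodies, only Euclidean balls have Borsuk number 3.) -/

import Mathlib

open Metric
local notation "⟪" x ", " y "⟫_ℝ" => @inner ℝ _ _ x y

-- diameter attained on compact sets
lemma diam_attained {E : Type*} [MetricSpace E] {s : Set E} (hs : IsCompact s)
    (hne : s.Nonempty) : ∃ x ∈ s, ∃ y ∈ s, dist x y = Metric.diam s := by
  obtain ⟨q, hq, hmax⟩ := (hs.prod hs).exists_isMaxOn (hne.prod hne)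
    (continuous_dist.continuousOn)
  refine ⟨q.1, hq.1, q.2, hq.2, le_antisymm (dist_le_diam_of_mem hs.isBounded hq.1 hq.2) ?_⟩
  refine Metric.diam_le_of_forall_dist_le (dist_nonneg.trans (le_refl _)) ?_
  intro x hx y hy
  exact hmax (Set.mk_mem_prod hx hy)

lemma half_diam_lt (C : Set (EuclideanSpace ℝ (Fin 2))) (p v₀ : EuclideanSpace ℝ (Fin 2))
    (hC : IsCompact C)
    (hsym : ∀ x ∈ C, (2 : ℝ) • p - x ∈ C)
    (R : ℝ) (hR0 : 0 < R) (hball : ∀ x ∈ C, dist x p ≤ R)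
    (hdiam : Metric.diam C = 2 * R)
    (hv₀ : v₀ - p ≠ 0) (hv₀C : v₀ ∉ C)
    (n : EuclideanSpace ℝ (Fin 2))
    (hperp : ∀ a : EuclideanSpace ℝ (Fin 2), ⟪a, n⟫_ℝ = 0 → ‖a‖ = R →
      a = v₀ - p ∨ a = -(v₀ - p)) :
    Metric.diam (C ∩ {x | 0 ≤ ⟪x - p, n⟫_ℝ}) < Metric.diam C := by
  set S := C ∩ {x | 0 ≤ ⟪x - p, n⟫_ℝ} with hS
  have hclosed : IsClosed {x : EuclideanSpace ℝ (Fin 2) | 0 ≤ ⟪x - p, n⟫_ℝ} :=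
    isClosed_le continuous_const (((continuous_id.sub continuous_const).inner continuous_const))
  have hScomp : IsCompact S := hC.inter_right hclosed
  rcases S.eq_empty_or_nonempty with hSe | hSne
  · rw [hSe, Metric.diam_empty, hdiam]; linarith
  have hle : Metric.diam S ≤ Metric.diam C :=
    Metric.diam_mono Set.inter_subset_left hC.isBounded
  rcases lt_or_eq_of_le hle with h | h
  · exact h
  exfalso
  obtain ⟨x, hx, y, hy, hxy⟩ := diam_attained hScomp hSne
  rw [h, hdiam] at hxy
  have hxC : x ∈ C := hx.1
  have hyC : y ∈ C := hy.1
  -- triangle equality forces y = 2p - x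
  have hxp : dist x p ≤ R := hball x hxC
  have hyp : dist y p ≤ R := hball y hyC
  have htri : dist x y ≤ dist x p + dist p y := dist_triangle x p y
  rw [hxy, dist_comm p y] at htri
  have hxR : dist x p = R := by linarith
  have hyR : dist y p = R := by linarith
  have hab : ‖(x - p) + (p - y)‖ = 2 * R := by
    have : (x - p) + (p - y) = x - y := by abel
    rw [this, ← dist_eq_norm, hxy]
  have hpar := parallelogram_law_with_norm ℝ (x - p) (p - y)
  have hna : ‖x - p‖ = R := by rwa [← dist_eq_norm]
  have hnb : ‖p - y‖ = R := by rw [← dist_eq_norm, dist_comm]; exact hyR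
  have hzero : ‖(x - p) - (p - y)‖ = 0 := by
    have h2 : ‖(x - p) - (p - y)‖ ^ 2 = 0 := by
      nlinarith [hpar, hab, hna, hnb]
    have := sq_eq_zero_iff.mp h2
    exact this
  have hxy2 : y = (2 : ℝ) • p - x := by
    have := sub_eq_zero.mp (norm_eq_zero.mp hzero)
    have h3 : x - p = p - y := this
    have : y = p + p - x := by
      have := congrArg (fun z => z + y + p - x) h3
      abel_nf at this ⊢
      linear_combination (norm := module) this
    rw [this]; module
  -- inner product must vanish
  have hfx : (0:ℝ) ≤ ⟪x - p, n⟫_ℝ := hx.2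
  have hfy : (0:ℝ) ≤ ⟪y - p, n⟫_ℝ := hy.2
  have hyneg : y - p = -(x - p) := by rw [hxy2]; module
  rw [hyneg, inner_neg_left] at hfy
  have hinner : ⟪x - p, n⟫_ℝ = 0 := le_antisymm (by linarith) hfx
  rcases hperp (x - p) hinner hna with hcase | hcase
  · have : x = v₀ := by
      have := congrArg (fun z => z + p) hcase
      simpa [sub_add_cancel] using this
    exact hv₀C (this ▸ hxC)
  · have hx2 : x = (2:ℝ) • p - v₀ := by
      have := congrArg (fun z => z + p) hcase
      rw [sub_add_cancel] at this
      rw [this]; module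
    have : v₀ ∈ C := by
      have h4 := hsym x hxC
      rw [hx2] at h4
      have : (2:ℝ) • p - ((2:ℝ) • p - v₀) = v₀ := by module
      rwa [this] at h4
    exact hv₀C this

set_option maxHeartbeats 1000000 in
theorem not_ball_implies_partition
    (C : Set (EuclideanSpace ℝ (Fin 2))) (p : EuclideanSpace ℝ (Fin 2))
    (hC : IsCompact C) (hconv : Convex ℝ C) (hint : (interior C).Nonempty)
    (hsym : ∀ x ∈ C, (2 : ℝ) • p - x ∈ C)
    (hnotball : ¬ ∃ (q : EuclideanSpace ℝ (Fin 2)) (r : ℝ), 0 < r ∧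
      C = Metric.closedBall q r) :
    ∃ C₁ C₂ : Set (EuclideanSpace ℝ (Fin 2)), C = C₁ ∪ C₂ ∧
      Metric.diam C₁ < Metric.diam C ∧ Metric.diam C₂ < Metric.diam C := by
  obtain ⟨y₀, hy₀⟩ := hint
  have hy₀C : y₀ ∈ C := interior_subset hy₀
  have hCne : C.Nonempty := ⟨y₀, hy₀C⟩
  -- p ∈ C
  have hpC : p ∈ C := by
    have h1 := hsym y₀ hy₀C
    have := hconv hy₀C h1 (by norm_num : (0:ℝ) ≤ 1/2) (by norm_num : (0:ℝ) ≤ 1/2)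
      (by norm_num)
    have heq : (1/2 : ℝ) • y₀ + (1/2 : ℝ) • ((2:ℝ) • p - y₀) = p := by module
    rwa [heq] at this
  -- circumradius
  obtain ⟨z, hzC, hzmax⟩ := hC.exists_isMaxOn hCne
    ((continuous_id.dist continuous_const).continuousOn)
  set R : ℝ := dist z p with hR
  have hball : ∀ x ∈ C, dist x p ≤ R := fun x hx => hzmax hx
  -- R > 0
  have hR0 : 0 < R := by
    rcases lt_or_ge 0 R with h | h
    · exact h
    exfalso
    have hsub : ∀ x ∈ C, x = p := by
      intro x hx
      have := hball x hx
      have : dist x p = 0 := le_antisymm (this.trans h) dist_nonneg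
      exact dist_eq_zero.mp this
    obtain ⟨ε, hε, hballsub⟩ := Metric.isOpen_iff.mp isOpen_interior y₀ hy₀
    set y₁ := y₀ + EuclideanSpace.single (0 : Fin 2) (ε/2) with hy₁
    have hy₁C : y₁ ∈ C := by
      apply interior_subset
      apply hballsub
      rw [Metric.mem_ball, hy₁, dist_eq_norm]
      have heq : y₀ + EuclideanSpace.single (0:Fin 2) (ε/2) - y₀
          = EuclideanSpace.single (0:Fin 2) (ε/2) := by abel
      rw [heq, EuclideanSpace.norm_single, Real.norm_eq_abs, abs_of_pos (by linarith)]
      linarith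
    have h1 := hsub y₀ hy₀C
    have h2 := hsub y₁ hy₁C
    rw [hy₁, h1] at h2
    have : EuclideanSpace.single (0 : Fin 2) (ε/2) = 0 := add_eq_left.mp h2
    have := congrArg (fun v => v 0) this
    simp [EuclideanSpace.single_apply] at this
    linarith
  -- diam C = 2R
  have hdiam : Metric.diam C = 2 * R := by
    apply le_antisymm
    · apply Metric.diam_le_of_forall_dist_le (by linarith)
      intro x hx y hy
      calc dist x y ≤ dist x p + dist p y := dist_triangle x p y
        _ ≤ R + R := add_le_add (hball x hx) (by rw [dist_comm]; exact hball y hy)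
        _ = 2 * R := by ring
    · have hz2 : (2:ℝ) • p - z ∈ C := hsym z hzC
      have := Metric.dist_le_diam_of_mem hC.isBounded hzC hz2
      have hd : dist z ((2:ℝ) • p - z) = 2 * R := by
        rw [dist_eq_norm, hR, dist_eq_norm]
        have : z - ((2:ℝ) • p - z) = (2:ℝ) • (z - p) := by module
        rw [this, norm_smul]
        simp
      linarith
  -- find a sphere point not in C
  have hsphere : ∃ v₀, dist v₀ p = R ∧ v₀ ∉ C := by
    by_contra hcon
    push_neg at hcon
    apply hnotball
    refine ⟨p, R, hR0, ?_⟩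
    apply Set.Subset.antisymm
    · intro x hx
      exact Metric.mem_closedBall.mpr (hball x hx)
    · intro y hy
      rw [Metric.mem_closedBall] at hy
      set s := dist y p with hs
      rcases eq_or_lt_of_le (dist_nonneg : (0:ℝ) ≤ s) with h0 | h0
      · have : y = p := dist_eq_zero.mp h0.symm
        rwa [this]
      · set u := y - p with hu
        have hnu : ‖u‖ = s := by rw [hu, hs, dist_eq_norm]
        set c : ℝ := R / s with hc
        have hqp : p + c • u ∈ C := by
          apply hcon
          rw [dist_eq_norm]
          simp only [add_sub_cancel_left]
          rw [norm_smul, hnu]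
          rw [Real.norm_eq_abs, abs_of_pos (by positivity), hc]
          field_simp
          exact div_self (ne_of_gt h0)
        have hqm : p - c • u ∈ C := by
          have := hsym _ hqp
          have heq : (2:ℝ) • p - (p + c • u) = p - c • u := by module
          rwa [heq] at this
        set t : ℝ := (R + s) / (2 * R) with ht
        have ht0 : 0 ≤ t := by positivity
        have ht1 : 0 ≤ 1 - t := by
          rw [ht]
          rw [sub_nonneg, div_le_one (by linarith)]
          linarith
        have hcomb := hconv hqp hqm ht0 ht1 (by ring)
        have hkey : t • (p + c • u) + (1 - t) • (p - c • u) = p + ((2 * t - 1) * c) • u := by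
          module
        have hscal : (2 * t - 1) * c = 1 := by
          rw [ht, hc]
          field_simp
          ring
          exact mul_inv_cancel₀ (ne_of_gt h0)
        rw [hkey, hscal, one_smul, hu] at hcomb
        have : p + (y - p) = y := by module
        rwa [this] at hcomb
  obtain ⟨v₀, hv₀R, hv₀C⟩ := hsphere
  set w := v₀ - p with hw
  have hnw : ‖w‖ = R := by rw [hw, ← dist_eq_norm]; exact hv₀R
  have hwne : w ≠ 0 := by
    intro h
    rw [h, norm_zero] at hnw
    linarith
  -- the rotated normal vector
  set n : EuclideanSpace ℝ (Fin 2) := (WithLp.equiv 2 (Fin 2 → ℝ)).symm ![-(w 1), w 0] with hn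
  have hn0 : n 0 = -(w 1) := rfl
  have hn1 : n 1 = w 0 := rfl
  have hperp : ∀ a : EuclideanSpace ℝ (Fin 2), ⟪a, n⟫_ℝ = 0 → ‖a‖ = R →
      a = w ∨ a = -w := by
    intro a hinner hna
    have hia : ⟪a, n⟫_ℝ = a 0 * n 0 + a 1 * n 1 := by
      simp [PiLp.inner_apply, RCLike.inner_apply, Fin.sum_univ_two]
      ring
    rw [hia, hn0, hn1] at hinner
    have hna2 : a 0 ^ 2 + a 1 ^ 2 = R ^ 2 := by
      have := real_inner_self_eq_norm_sq a
      rw [hna] at this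
      rw [← this]
      simp [PiLp.inner_apply, RCLike.inner_apply, Fin.sum_univ_two]
      simp [EuclideanSpace.norm_sq_eq, Fin.sum_univ_two]
    have hnw2 : w 0 ^ 2 + w 1 ^ 2 = R ^ 2 := by
      have := real_inner_self_eq_norm_sq w
      rw [hnw] at this
      rw [← this]
      simp [PiLp.inner_apply, RCLike.inner_apply, Fin.sum_univ_two]
      simp [EuclideanSpace.norm_sq_eq, Fin.sum_univ_two]
    have hdotsq : (a 0 * w 0 + a 1 * w 1) ^ 2 = (R ^ 2) ^ 2 := by
      nlinarith [hinner, hna2, hnw2]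
    rcases le_or_gt 0 (a 0 * w 0 + a 1 * w 1) with hsgn | hsgn
    · left
      have hdot : a 0 * w 0 + a 1 * w 1 = R ^ 2 := by
        nlinarith [hdotsq, sq_nonneg R]
      have h00 : (a 0 - w 0) ^ 2 + (a 1 - w 1) ^ 2 = 0 := by nlinarith
      ext i
      fin_cases i
      · have : a 0 - w 0 = 0 := by nlinarith [sq_nonneg (a 0 - w 0), sq_nonneg (a 1 - w 1)]
        simpa [sub_eq_zero] using this
      · have : a 1 - w 1 = 0 := by nlinarith [sq_nonneg (a 0 - w 0), sq_nonneg (a 1 - w 1)]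
        simpa [sub_eq_zero] using this
    · right
      have hdot : a 0 * w 0 + a 1 * w 1 = -(R ^ 2) := by
        nlinarith [hdotsq, sq_nonneg R]
      have h00 : (a 0 + w 0) ^ 2 + (a 1 + w 1) ^ 2 = 0 := by nlinarith
      ext i
      fin_cases i
      · have h5 : a 0 + w 0 = 0 := by nlinarith [sq_nonneg (a 0 + w 0), sq_nonneg (a 1 + w 1)]
        have : a 0 = -(w 0) := by linarith
        simpa using this
      · have h5 : a 1 + w 1 = 0 := by nlinarith [sq_nonneg (a 0 + w 0), sq_nonneg (a 1 + w 1)]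
        have : a 1 = -(w 1) := by linarith
        simpa using this
  -- apply the helper lemma twice
  refine ⟨C ∩ {x | 0 ≤ ⟪x - p, n⟫_ℝ}, C ∩ {x | 0 ≤ ⟪x - p, -n⟫_ℝ}, ?_, ?_, ?_⟩
  · ext x
    simp only [Set.mem_union, Set.mem_inter_iff, Set.mem_setOf_eq]
    constructor
    · intro hx
      rcases le_total 0 (⟪x - p, n⟫_ℝ) with h | h
      · exact Or.inl ⟨hx, h⟩
      · exact Or.inr ⟨hx, by rw [inner_neg_right]; linarith⟩
    · rintro (⟨hx, _⟩ | ⟨hx, _⟩) <;> exact hx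
  · exact half_diam_lt C p v₀ hC hsym R hR0 hball hdiam hwne hv₀C n
      (fun a h1 h2 => hperp a h1 h2)
  · apply half_diam_lt C p v₀ hC hsym R hR0 hball hdiam hwne hv₀C (-n)
    intro a h1 h2
    rw [inner_neg_right, neg_eq_zero] at h1
    exact hperp a h1 h2
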